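/- arXiv:1909.07634 — 4 statements merged into one kernel-verified Lean document; each statement's English description precedes it below -/
import Mathlib

section
/- The Hankel determinant of the deformed Laguerre weight equals a Toeplitz determinant of K-Bessel functions: D_n(t) = det[μ_{j+k}(t)]_{j,k=0}^{n-1} = (-1)^{n(n-1)/2} 2^n t^{n(n+α)/2} det[K_{j-k+n+α}(2√t)]_{j,k=0}^{n-1}, for t > 0. -/
open MeasureTheory Set

/-- The modified Bessel function of the second kind,
`K_ν(z) = ∫_0^∞ e^{-z cosh u} cosh(ν u) du` for `z > 0`. -/
noncomputable def besselK (ν z : ℝ) : ℝ :=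
  ∫ u in Ioi (0 : ℝ), Real.exp (-z * Real.cosh u) * Real.cosh (ν * u)

lemma sign_revPerm (n : ℕ) :
    Equiv.Perm.sign (Fin.revPerm : Equiv.Perm (Fin n)) = (-1) ^ (n * (n - 1) / 2) := by
  induction n with
  | zero => decide
  | succ m ih =>
    have key : (Fin.revPerm : Equiv.Perm (Fin (m + 1)))
        = Equiv.Perm.decomposeFin.symm (0, Fin.revPerm) * finRotate (m + 1) := by
      ext i
      refine Fin.lastCases ?_ (fun x => ?_) i
      · simp [Fin.rev_last, finRotate_last]
      · have h1 : finRotate (m + 1) (Fin.castSucc x) = x.succ := by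
          rw [finRotate_succ_apply, Fin.coeSucc_eq_succ]
        simp only [Equiv.Perm.mul_apply, h1, Fin.revPerm_apply, Fin.rev_castSucc,
          Equiv.Perm.decomposeFin_symm_apply_succ, Equiv.swap_self, Equiv.refl_apply]
    have harith : (m + 1) * m / 2 = m * (m - 1) / 2 + m := by
      rcases m with _ | k
      · simp
      · obtain ⟨c, hc⟩ : Even ((k + 1) * k) := by
          rw [Nat.mul_comm]; exact Nat.even_mul_succ_self k
        have h2 : (k + 1 + 1) * (k + 1) = (k + 1) * k + 2 * (k + 1) := by ring
        simp only [Nat.add_sub_cancel]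
        omega
    rw [key, map_mul, Equiv.Perm.decomposeFin.symm_sign, if_pos rfl, one_mul, ih,
      sign_finRotate]
    simp only [Nat.add_sub_cancel]
    rw [harith, pow_add]

lemma integrable_aux {a : ℝ} (ha : 0 < a) (ν : ℝ) :
    Integrable (fun u : ℝ => Real.exp (ν * u - 2 * a * Real.cosh u)) := by
  have key : ∀ u : ℝ, ν * u - 2 * a * Real.cosh u ≤ (|ν| + 1) ^ 2 / a - |u| := by
    intro u
    have h1 : Real.exp |u| ≤ 2 * Real.cosh u := by
      rw [Real.cosh_eq]
      rcases abs_cases u with ⟨h, _⟩ | ⟨h, _⟩ <;> rw [h] <;>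
        nlinarith [Real.exp_pos u, Real.exp_pos (-u)]
    have h2 : 1 + |u| / 2 ≤ Real.exp (|u| / 2) := by
      have := Real.add_one_le_exp (|u| / 2); linarith
    have h3 : Real.exp (|u| / 2) ^ 2 = Real.exp |u| := by
      rw [← Real.exp_nat_mul]; congr 1; push_cast; ring
    have h4 : u ^ 2 / 4 ≤ Real.exp |u| := by
      nlinarith [abs_nonneg u, sq_abs u]
    have h5 : ν * u ≤ |ν| * |u| := by
      calc ν * u ≤ |ν * u| := le_abs_self _
      _ = |ν| * |u| := abs_mul _ _
    have h6 : a * (u ^ 2 / 4) ≤ a * Real.exp |u| := by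
      exact mul_le_mul_of_nonneg_left h4 ha.le
    have h7 : 0 ≤ (a * |u| - 2 * (|ν| + 1)) ^ 2 := sq_nonneg _
    have h8 : 0 < a := ha
    have hA : a * (ν * u) ≤ a * (|ν| * |u|) := mul_le_mul_of_nonneg_left h5 ha.le
    have hB : a * a * (u ^ 2 / 4) ≤ a * a * Real.exp |u| :=
      mul_le_mul_of_nonneg_left h4 (by positivity)
    have hC : a * a * Real.exp |u| ≤ a * a * (2 * Real.cosh u) :=
      mul_le_mul_of_nonneg_left h1 (by positivity)
    rw [div_sub' ha.ne', le_div_iff₀ ha]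
    nlinarith [hA, hB, hC, h7, sq_abs u, abs_nonneg u, ha.le]
  have hg : Integrable (fun u : ℝ => Real.exp ((|ν| + 1) ^ 2 / a) * Real.exp (-|u|)) := by
    apply Integrable.const_mul
    have h1 : IntegrableOn (fun u : ℝ => Real.exp (-|u|)) (Iic 0) := by
      apply (integrableOn_exp_Iic 0).congr_fun ?_ measurableSet_Iic
      intro x hx
      simp only [mem_Iic] at hx
      simp [abs_of_nonpos hx]
    have h2 : IntegrableOn (fun u : ℝ => Real.exp (-|u|)) (Ioi 0) := by
      apply (exp_neg_integrableOn_Ioi 0 one_pos).congr_fun ?_ measurableSet_Ioi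
      intro x hx
      simp only [mem_Ioi] at hx
      simp [abs_of_pos hx]
    have := h1.union h2
    rwa [Iic_union_Ioi, integrableOn_univ] at this
  refine hg.mono' ?_ ?_
  · exact (Real.continuous_exp.comp (by continuity)).aestronglyMeasurable
  · filter_upwards with u
    rw [Real.norm_eq_abs, abs_of_pos (Real.exp_pos _), ← Real.exp_add]
    exact Real.exp_le_exp.mpr (by linarith [key u])

lemma integral_line_eq_two_besselK {a : ℝ} (ha : 0 < a) (ν : ℝ) :
    ∫ u : ℝ, Real.exp (ν * u - 2 * a * Real.cosh u) = 2 * besselK ν (2 * a) := by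
  set f : ℝ → ℝ := fun u => Real.exp (ν * u - 2 * a * Real.cosh u) with hf
  have hint := integrable_aux ha ν
  have hneg : ∀ u : ℝ, f (-u) = Real.exp ((-ν) * u - 2 * a * Real.cosh u) := by
    intro u; simp [hf, Real.cosh_neg]
  have hsplit : ∫ u, f u = (∫ u in Iic (0:ℝ), f u) + ∫ u in Ioi (0:ℝ), f u :=
    (intervalIntegral.integral_Iic_add_Ioi hint.integrableOn hint.integrableOn).symm
  have hIic : ∫ u in Iic (0:ℝ), f u = ∫ u in Ioi (0:ℝ), f (-u) := by
    rw [integral_comp_neg_Ioi, neg_zero]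
  have hintneg : Integrable (fun u : ℝ => f (-u)) := by
    simp only [hneg]; exact integrable_aux ha (-ν)
  rw [hsplit, hIic, ← integral_add hintneg.integrableOn hint.integrableOn]
  rw [besselK, ← integral_const_mul]
  refine setIntegral_congr_fun measurableSet_Ioi (fun u _ => ?_)
  rw [hneg u]
  simp only [sub_eq_add_neg, Real.exp_add, Real.cosh_eq, Real.exp_neg, neg_mul]
  field_simp
  ring

lemma moment_eq {t : ℝ} (ht : 0 < t) (s : ℝ) :
    ∫ x in Ioi (0 : ℝ), x ^ s * Real.exp (-x - t / x)
      = 2 * t ^ ((s + 1) / 2) * besselK (s + 1) (2 * Real.sqrt t) := by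
  set a := Real.sqrt t with hadef
  have ha : 0 < a := Real.sqrt_pos.mpr ht
  have ht2 : a * a = t := Real.mul_self_sqrt ht.le
  have himg : (fun u : ℝ => a * Real.exp u) '' univ = Ioi 0 := by
    rw [image_univ]
    ext y
    simp only [mem_range, mem_Ioi]
    constructor
    · rintro ⟨u, rfl⟩; positivity
    · intro hy
      exact ⟨Real.log (y / a), by rw [Real.exp_log (by positivity)]; field_simp⟩
  have hderiv : ∀ u ∈ (univ : Set ℝ),
      HasDerivWithinAt (fun u : ℝ => a * Real.exp u) (a * Real.exp u) univ u :=
    fun u _ => ((Real.hasDerivAt_exp u).const_mul a).hasDerivWithinAt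
  have hinj : InjOn (fun u : ℝ => a * Real.exp u) univ := by
    intro x _ y _ h
    simp only at h
    exact Real.exp_injective (mul_left_cancel₀ ha.ne' h)
  have hsub := integral_image_eq_integral_abs_deriv_smul MeasurableSet.univ hderiv hinj
      (fun x => x ^ s * Real.exp (-x - t / x))
  rw [← himg, hsub, Measure.restrict_univ]
  have hpt : ∀ u : ℝ, |a * Real.exp u| • ((a * Real.exp u) ^ s *
      Real.exp (-(a * Real.exp u) - t / (a * Real.exp u)))
      = a ^ (s + 1) * Real.exp ((s + 1) * u - 2 * a * Real.cosh u) := by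
    intro u
    have he : (0 : ℝ) < Real.exp u := Real.exp_pos u
    rw [smul_eq_mul, abs_of_pos (by positivity)]
    have h1 : (a * Real.exp u) ^ s = a ^ s * Real.exp (s * u) := by
      rw [Real.mul_rpow ha.le he.le, Real.rpow_def_of_pos he, Real.log_exp, mul_comm u s]
    have h2 : t / (a * Real.exp u) = a * Real.exp (-u) := by
      rw [Real.exp_neg]; rw [← ht2]; field_simp
    have h3 : (s + 1) * u - 2 * a * Real.cosh u
        = s * u + u + (-(a * Real.exp u) - a * Real.exp (-u)) := by
      rw [Real.cosh_eq]; ring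
    rw [h1, h2, Real.rpow_add_one ha.ne', h3, Real.exp_add, Real.exp_add]
    ring
  simp_rw [hpt]
  rw [integral_const_mul, integral_line_eq_two_besselK ha (s + 1)]
  have h4 : a ^ (s + 1) = t ^ ((s + 1) / 2) := by
    rw [hadef, Real.sqrt_eq_rpow, ← Real.rpow_mul ht.le]
    congr 1; ring
  rw [h4]; ring

/-- The Hankel determinant of the moments of the deformed Laguerre weight equals a
Toeplitz determinant of `K`-Bessel functions:
`D_n(t) = (-1)^{n(n-1)/2} 2^n t^{n(n+α)/2} det[K_{j-k+n+α}(2√t)]`. -/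
theorem hankel_det_eq_besselK_toeplitz (t α : ℝ) (ht : 0 < t) (n : ℕ) (hn : 0 < n) :
    Matrix.det (Matrix.of fun j k : Fin n =>
        ∫ x in Ioi (0 : ℝ), x ^ (((j : ℕ) + (k : ℕ) : ℝ) + α) * Real.exp (-x - t / x))
      = (-1) ^ (n * (n - 1) / 2) * 2 ^ n * t ^ ((n * (n + α)) / 2) *
        Matrix.det (Matrix.of fun j k : Fin n =>
          besselK (((j : ℕ) : ℝ) - ((k : ℕ) : ℝ) + n + α) (2 * Real.sqrt t)) := by
  set B : Matrix (Fin n) (Fin n) ℝ := Matrix.of fun j k : Fin n =>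
    besselK (((j : ℕ) : ℝ) - ((k : ℕ) : ℝ) + n + α) (2 * Real.sqrt t) with hB
  set A : Matrix (Fin n) (Fin n) ℝ := Matrix.of fun j k : Fin n =>
    besselK (((j : ℕ) : ℝ) + ((k : ℕ) : ℝ) + α + 1) (2 * Real.sqrt t) with hA
  set v : Fin n → ℝ := fun k => 2 * t ^ ((((k : ℕ) : ℝ) + α + 1) / 2) with hv
  set w : Fin n → ℝ := fun j => t ^ (((j : ℕ) : ℝ) / 2) with hw
  have step1 : (Matrix.of fun j k : Fin n =>
        ∫ x in Ioi (0 : ℝ), x ^ (((j : ℕ) + (k : ℕ) : ℝ) + α) * Real.exp (-x - t / x))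
      = Matrix.of fun j k : Fin n => v k * ((Matrix.of fun j k : Fin n => w j * A j k) j k) := by
    ext j k
    simp only [Matrix.of_apply, hA, hv, hw]
    rw [moment_eq ht (((j : ℕ) : ℝ) + ((k : ℕ) : ℝ) + α)]
    have e1 : (((j : ℕ) : ℝ) + ((k : ℕ) : ℝ) + α + 1) / 2
        = ((k : ℕ) + α + 1) / 2 + ((j : ℕ) : ℝ) / 2 := by ring
    rw [e1, Real.rpow_add ht]
    ring
  have hAB : A = B.submatrix id (Fin.revPerm : Equiv.Perm (Fin n)) := by
    ext j k
    simp only [hA, hB, Matrix.submatrix_apply, Matrix.of_apply, id_eq, Fin.revPerm_apply]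
    congr 1
    have hk : ((Fin.rev k : ℕ) : ℝ) = (n : ℝ) - 1 - ((k : ℕ) : ℝ) := by
      have h1 : (Fin.rev k : ℕ) = n - 1 - (k : ℕ) := Fin.val_rev k ▸ by omega
      rw [h1]
      have hk1 : (k : ℕ) + 1 ≤ n := k.isLt
      push_cast [Nat.cast_sub (by omega : (k : ℕ) ≤ n - 1), Nat.cast_sub (by omega : 1 ≤ n)]
      ring
    rw [hk]
    ring
  have hsign : ((Equiv.Perm.sign (Fin.revPerm : Equiv.Perm (Fin n)) : ℤ) : ℝ)
      = (-1 : ℝ) ^ (n * (n - 1) / 2) := by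
    rw [sign_revPerm]
    push_cast
    ring
  have step2 : Matrix.det A = (-1 : ℝ) ^ (n * (n - 1) / 2) * Matrix.det B := by
    rw [hAB, Matrix.det_permute' _ B, ← hsign]
  have hsum : ∑ k : Fin n, ((k : ℕ) : ℝ) = n * (n - 1) / 2 := by
    rw [Fin.sum_univ_eq_sum_range (fun i => (i : ℝ)) n]
    have h2 : (∑ i ∈ Finset.range n, i) * 2 = n * (n - 1) := Finset.sum_range_id_mul_two n
    have h4 := congrArg (Nat.cast : ℕ → ℝ) h2
    push_cast [Nat.cast_sub hn] at h4
    linarith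
  have hprodv : ∏ k : Fin n, v k = 2 ^ n * t ^ (∑ k : Fin n, ((((k : ℕ) : ℝ) + α + 1) / 2)) := by
    rw [hv, Finset.prod_mul_distrib, Finset.prod_const, Finset.card_univ, Fintype.card_fin,
      Real.rpow_sum_of_pos ht]
  have hprodw : ∏ j : Fin n, w j = t ^ (∑ j : Fin n, (((j : ℕ) : ℝ) / 2)) := by
    rw [hw, Real.rpow_sum_of_pos ht]
  have hexp : (∑ k : Fin n, ((((k : ℕ) : ℝ) + α + 1) / 2)) + (∑ j : Fin n, (((j : ℕ) : ℝ) / 2))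
      = (n * (n + α)) / 2 := by
    have e0 : ∀ k : Fin n, ((((k : ℕ) : ℝ) + α + 1) / 2)
        = ((k : ℕ) : ℝ) / 2 + (α + 1) / 2 := fun k => by ring
    simp_rw [e0]
    rw [Finset.sum_add_distrib, Finset.sum_const, Finset.card_univ, Fintype.card_fin,
      ← Finset.sum_div, hsum, nsmul_eq_mul]
    field_simp
    ring
  rw [step1, Matrix.det_mul_row v, Matrix.det_mul_column w, step2, hprodv, hprodw]
  rw [show (2:ℝ) ^ n * t ^ (∑ k : Fin n, ((((k : ℕ) : ℝ) + α + 1) / 2)) *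
      (t ^ (∑ j : Fin n, (((j : ℕ) : ℝ) / 2)) * ((-1:ℝ) ^ (n * (n - 1) / 2) * Matrix.det B))
      = (-1:ℝ) ^ (n * (n - 1) / 2) * 2 ^ n *
        (t ^ (∑ k : Fin n, ((((k : ℕ) : ℝ) + α + 1) / 2)) * t ^ (∑ j : Fin n, (((j : ℕ) : ℝ) / 2)))
        * Matrix.det B from by ring]
  rw [← Real.rpow_add ht, hexp]
end

section
/- If h(t) satisfies (t h'')² + (4(h')² − 1)(t h' − h) + v₁v₂ h' − (v₁² + v₂²)/4 = 0 with (v₁, v₂) = (2n+α, −α), then y(t) = h(t) + t/2 − α²/4 satisfies (t y'')² = (n − (2n+α)y')² − 4(n(n+α) + t y' − y) y' (y' − 1). -/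
/-- If `h` satisfies `(t h'')² + (4(h')² − 1)(t h' − h) + v₁v₂ h' − (v₁² + v₂²)/4 = 0`
with `(v₁, v₂) = (2n+α, −α)`, then `y(t) = h(t) + t/2 − α²/4` satisfies
`(t y'')² = (n − (2n+α)y')² − 4(n(n+α) + t y' − y) y' (y' − 1)`. -/
theorem h_to_sigmaPIII'_LUE (n : ℕ) (α : ℝ) (h y : ℝ → ℝ)
    (hd1 : ∀ t > (0 : ℝ), DifferentiableAt ℝ h t)
    (heq : ∀ t > (0 : ℝ),
      (t * deriv (deriv h) t) ^ 2
        + (4 * (deriv h t) ^ 2 - 1) * (t * deriv h t - h t)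
        + (2 * n + α) * (-α) * deriv h t - ((2 * n + α) ^ 2 + α ^ 2) / 4 = 0)
    (hy : ∀ t : ℝ, y t = h t + t / 2 - α ^ 2 / 4) :
    ∀ t > (0 : ℝ),
      (t * deriv (deriv y) t) ^ 2
        = ((n : ℝ) - (2 * n + α) * deriv y t) ^ 2
          - 4 * ((n : ℝ) * (n + α) + t * deriv y t - y t) * deriv y t * (deriv y t - 1) := by
  have hyfun : y = fun s => h s + (s / 2 - α ^ 2 / 4) := by
    funext s; rw [hy s]; ring
  have hy' : ∀ s > (0 : ℝ), deriv y s = deriv h s + 1 / 2 := by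
    intro s hs
    rw [hyfun]
    have hder : HasDerivAt (fun s : ℝ => h s + (s / 2 - α ^ 2 / 4))
        (deriv h s + 1 / 2) s := by
      have h1 : HasDerivAt (fun s : ℝ => s / 2 - α ^ 2 / 4) (1 / 2) s := by
        simpa using ((hasDerivAt_id s).div_const 2).sub_const (α ^ 2 / 4)
      exact ((hd1 s hs).hasDerivAt).add h1
    exact hder.deriv
  intro t ht
  have hy'' : deriv (deriv y) t = deriv (deriv h) t := by
    have hev : deriv y =ᶠ[nhds t] fun s => deriv h s + 1 / 2 := by
      filter_upwards [Ioi_mem_nhds ht] with s hs using hy' s hs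
    rw [hev.deriv_eq]
    simp
  rw [hy'', hy' t ht, hy t]
  have heq' := heq t ht
  nlinarith [heq', sq_nonneg (deriv h t)]
end

section
/- Compatibility of the two equations for F: if F is a differentiable function satisfying 2F + F' − 4tF' − 6t(F')² + 4FF' = 1 on an interval, then F also satisfies (1 − F')² − 4F'(F' + 1)(tF' − F) = 0 on that interval, provided the second equation holds at one point (e.g. F has a power series at 0 with F(0)=0). -/
open Set Filter Topology

private lemma quad_roots_finite (α β γ : ℝ) (h : α ≠ 0 ∨ β ≠ 0 ∨ γ ≠ 0) :
    {y : ℝ | α*y^2 + β*y + γ = 0}.Finite := by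
  have hp : (Polynomial.C α * Polynomial.X^2 + Polynomial.C β * Polynomial.X
      + Polynomial.C γ) ≠ 0 := by
    intro h0
    have h2 := congrArg (fun p => Polynomial.coeff p 2) h0
    have h1 := congrArg (fun p => Polynomial.coeff p 1) h0
    have hc := congrArg (fun p => Polynomial.coeff p 0) h0
    simp [Polynomial.coeff_add, Polynomial.coeff_C_mul, Polynomial.coeff_X_pow,
      Polynomial.coeff_C] at h2 h1 hc
    tauto
  have hfin := Polynomial.finite_setOf_isRoot hp
  have : {y : ℝ | α*y^2 + β*y + γ = 0}
      ⊆ {x | Polynomial.IsRoot (Polynomial.C α * Polynomial.X^2 + Polynomial.C β * Polynomial.X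
      + Polynomial.C γ) x} := by
    intro y hy
    simp only [mem_setOf_eq, Polynomial.IsRoot, Polynomial.eval_add, Polynomial.eval_mul,
      Polynomial.eval_pow, Polynomial.eval_C, Polynomial.eval_X]
    linarith [hy.out]
  exact hfin.subset this

/-- glue lemma: continuous on an open interval, derivative zero outside a finite set,
hence constant. -/
private lemma const_of_finite_bad (a b : ℝ) (Z : Set ℝ) (hZ : Z.Finite) (g : ℝ → ℝ)
    (hc : ∀ t ∈ Ioo a b, ContinuousAt g t)
    (hd : ∀ t ∈ Ioo a b, t ∉ Z → HasDerivAt g 0 t) :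
    ∀ s ∈ Ioo a b, ∀ t ∈ Ioo a b, g s = g t := by
  -- base : no bad points in [c,d)
  have base : ∀ c d : ℝ, c ∈ Ioo a b → d ∈ Ioo a b → c ≤ d →
      (∀ x ∈ Ico c d, x ∉ Z) → g d = g c := by
    intro c d hcI hdI hcd hgood
    have hsub : Icc c d ⊆ Ioo a b := fun x hx => ⟨lt_of_lt_of_le hcI.1 hx.1, lt_of_le_of_lt hx.2 hdI.2⟩
    have hcont : ContinuousOn g (Icc c d) := fun x hx => (hc x (hsub hx)).continuousWithinAt
    have hderiv : ∀ x ∈ Ico c d, HasDerivWithinAt g 0 (Ici x) x := fun x hx =>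
      (hd x (hsub (Ico_subset_Icc_self hx)) (hgood x hx)).hasDerivWithinAt
    exact constant_of_has_deriv_right_zero hcont hderiv d (right_mem_Icc.2 hcd)
  have key : ∀ n : ℕ, ∀ c d : ℝ, c ∈ Ioo a b → d ∈ Ioo a b → c ≤ d →
      (Z ∩ Ico c d).ncard ≤ n → g d = g c := by
    intro n
    induction n with
    | zero =>
      intro c d hcI hdI hcd hn
      have hfin : (Z ∩ Ico c d).Finite := hZ.inter_of_left _
      have hempty : Z ∩ Ico c d = ∅ := by
        rw [← Set.ncard_eq_zero hfin]; omega
      refine base c d hcI hdI hcd ?_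
      intro x hx hxZ
      exact Set.notMem_empty x (hempty ▸ (⟨hxZ, hx⟩ : x ∈ Z ∩ Ico c d))
    | succ n ih =>
      intro c d hcI hdI hcd hn
      have hfin : (Z ∩ Ico c d).Finite := hZ.inter_of_left _
      by_cases hne : (Z ∩ Ico c d).Nonempty
      · obtain ⟨z, hzmem, hzmax⟩ := Set.Finite.exists_maximalFor id _ hfin hne
        have hzmax' : ∀ y ∈ Z ∩ Ico c d, y ≤ z := by
          intro y hy
          by_contra hlt
          push_neg at hlt
          exact (not_le.2 hlt) (hzmax hy hlt.le)
        have hzI : z ∈ Ioo a b :=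
          ⟨lt_of_lt_of_le hcI.1 hzmem.2.1, lt_trans hzmem.2.2 hdI.2⟩
        have hzd : z < d := hzmem.2.2
        -- g d = g z
        have h1 : g d = g z := by
          have hxall : ∀ x ∈ Ioo z d, g d = g x := by
            intro x hx
            have hxI : x ∈ Ioo a b := ⟨lt_trans hzI.1 hx.1, lt_trans hx.2 hdI.2⟩
            refine base x d hxI hdI hx.2.le ?_
            intro y hy hyZ
            have hyI : y ∈ Z ∩ Ico c d := ⟨hyZ, le_trans hzmem.2.1 (le_trans hx.1.le hy.1), hy.2⟩
            have := hzmax' y hyI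
            have : y < y := lt_of_le_of_lt this (lt_of_lt_of_le hx.1 hy.1)
            exact absurd this (lt_irrefl y)
          have ht1 : Tendsto g (𝓝[>] z) (𝓝 (g z)) :=
            ((hc z hzI).continuousWithinAt).tendsto
          have ht2 : Tendsto g (𝓝[>] z) (𝓝 (g d)) := by
            have hmem : Ioo z d ∈ 𝓝[>] z := Ioo_mem_nhdsGT_of_mem ⟨le_refl z, hzd⟩
            refine Tendsto.congr' ?_ tendsto_const_nhds
            filter_upwards [hmem] with x hx
            exact hxall x hx
          exact (tendsto_nhds_unique ht1 ht2).symm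
        -- g z = g c
        have h2 : g z = g c := by
          refine ih c z hcI hzI hzmem.2.1 ?_
          have hsub : Z ∩ Ico c z ⊆ (Z ∩ Ico c d) \ {z} := by
            intro y hy
            refine ⟨⟨hy.1, hy.2.1, lt_trans hy.2.2 hzd⟩, ?_⟩
            simp only [mem_singleton_iff]
            exact fun h => absurd (h ▸ hy.2.2) (lt_irrefl z)
          have h3 : ((Z ∩ Ico c d) \ {z}).ncard = (Z ∩ Ico c d).ncard - 1 :=
            Set.ncard_diff_singleton_of_mem hzmem
          have h4 : (Z ∩ Ico c z).ncard ≤ (Z ∩ Ico c d).ncard - 1 := by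
            rw [← h3]
            exact Set.ncard_le_ncard hsub hfin.diff
          have h5 : 1 ≤ (Z ∩ Ico c d).ncard := (Set.ncard_pos hfin).2 ⟨z, hzmem⟩
          omega
        rw [h1, h2]
      · rw [Set.not_nonempty_iff_eq_empty] at hne
        refine base c d hcI hdI hcd ?_
        intro x hx hxZ
        have : x ∈ Z ∩ Ico c d := ⟨hxZ, hx⟩
        rw [hne] at this
        exact absurd this (Set.notMem_empty x)
  intro s hs t ht
  rcases le_total s t with h | h
  · exact (key (Z.ncard + (Z ∩ Ico s t).ncard) s t hs ht h (by
      have := Set.ncard_le_ncard (Set.inter_subset_left (s := Z) (t := Ico s t)) hZ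
      omega)).symm
  · exact key (Z.ncard + (Z ∩ Ico t s).ncard) t s ht hs h (by
      have := Set.ncard_le_ncard (Set.inter_subset_left (s := Z) (t := Ico t s)) hZ
      omega)


open Set Filter Topology in
/-- Compatibility of the two equations for `F`: if `F` is differentiable on an
interval and satisfies `2F + F' − 4tF' − 6t(F')² + 4FF' = 1` there, and the second
equation `(1 − F')² − 4F'(F' + 1)(tF' − F) = 0` holds at one point of the interval,
then the second equation holds on the whole interval. -/
theorem F_equations_compatible (a b : ℝ) (F : ℝ → ℝ)
    (hF : ∀ t ∈ Set.Ioo a b, DifferentiableAt ℝ F t)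
    (hA : ∀ t ∈ Set.Ioo a b,
      2 * F t + deriv F t - 4 * t * deriv F t - 6 * t * (deriv F t) ^ 2
        + 4 * F t * deriv F t = 1)
    (t₀ : ℝ) (ht₀ : t₀ ∈ Set.Ioo a b)
    (hB0 : (1 - deriv F t₀) ^ 2
      - 4 * deriv F t₀ * (deriv F t₀ + 1) * (t₀ * deriv F t₀ - F t₀) = 0) :
    ∀ t ∈ Set.Ioo a b,
      (1 - deriv F t) ^ 2
        - 4 * deriv F t * (deriv F t + 1) * (t * deriv F t - F t) = 0 := by
  have hq : ∀ s ∈ Set.Ioo a b,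
      -6*s*(deriv F s)^2 + (1 - 4*s + 4*F s)*(deriv F s) + (2*F s - 1) = 0 := by
    intro s hs
    linear_combination hA s hs
  have ucont : ∀ t₁ ∈ Set.Ioo a b, ContinuousAt (deriv F) t₁ := by
    intro t₁ ht₁
    have hFc : ∀ s ∈ Set.Ioo a b, ContinuousAt F s := fun s hs => (hF s hs).continuousAt
    rw [Metric.continuousAt_iff]
    intro ε hε
    have hroots : {y : ℝ | (-6*t₁)*y^2 + (1 - 4*t₁ + 4*F t₁)*y + (2*F t₁ - 1) = 0}.Finite := by
      apply quad_roots_finite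
      rcases eq_or_ne t₁ 0 with h0 | h0
      · right
        by_cases hb : (1 - 4*t₁ + 4*F t₁) = 0
        · right
          subst h0
          intro hg
          norm_num at hb hg
          linarith
        · left; exact hb
      · left
        simp only [ne_eq, neg_mul, neg_eq_zero, mul_eq_zero]
        push_neg
        exact ⟨by norm_num, h0⟩
    have pick : ∀ lo hi : ℝ, lo < hi → ∃ c, c ∈ Ioo lo hi ∧
        (-6*t₁)*c^2 + (1 - 4*t₁ + 4*F t₁)*c + (2*F t₁ - 1) ≠ 0 := by
      intro lo hi hlh
      obtain ⟨c, hc⟩ := ((Set.Ioo_infinite hlh).diff hroots).nonempty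
      exact ⟨c, hc.1, hc.2⟩
    have side : ∀ c : ℝ, ((-6*t₁)*c^2 + (1 - 4*t₁ + 4*F t₁)*c + (2*F t₁ - 1) ≠ 0) →
        ∃ δ > 0, ∀ s : ℝ, |s - t₁| < δ → s ∈ Set.Ioo a b ∧ deriv F s ≠ c := by
      intro c hcne
      have hcont : ContinuousAt (fun s => (-6*s)*c^2 + (1 - 4*s + 4*F s)*c + (2*F s - 1)) t₁ := by
        have h2 := hFc t₁ ht₁
        fun_prop
      have hev1 : ∀ᶠ s in 𝓝 t₁, (-6*s)*c^2 + (1 - 4*s + 4*F s)*c + (2*F s - 1) ≠ 0 :=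
        hcont.eventually_ne hcne
      have hev2 : ∀ᶠ s in 𝓝 t₁, s ∈ Set.Ioo a b := isOpen_Ioo.eventually_mem ht₁
      have hev := hev2.and hev1
      rw [Metric.eventually_nhds_iff] at hev
      obtain ⟨δ, hδ, hball⟩ := hev
      refine ⟨δ, hδ, fun s hs => ?_⟩
      have hmem := hball (show dist s t₁ < δ by rwa [Real.dist_eq])
      refine ⟨hmem.1, fun hceq => hmem.2 ?_⟩
      have := hq s hmem.1
      rw [hceq] at this
      linarith [this]
    have lock : ∀ c : ℝ, ((-6*t₁)*c^2 + (1 - 4*t₁ + 4*F t₁)*c + (2*F t₁ - 1) ≠ 0) →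
        ∃ δ > 0, ∀ s : ℝ, |s - t₁| < δ →
          ((deriv F t₁ < c → deriv F s < c) ∧ (c < deriv F t₁ → c < deriv F s)) := by
      intro c hcne
      obtain ⟨δ, hδ, hside⟩ := side c hcne
      refine ⟨δ, hδ, fun s hs => ?_⟩
      set J := Ioo (t₁ - δ) (t₁ + δ) with hJdef
      have hJsub : ∀ x ∈ J, x ∈ Set.Ioo a b ∧ deriv F x ≠ c := by
        intro x hx
        exact hside x (by rw [abs_sub_lt_iff]; constructor <;> [linarith [hx.2]; linarith [hx.1]])
      have hDar := hasDerivWithinAt_forall_lt_or_forall_gt_of_forall_ne (convex_Ioo (t₁-δ) (t₁+δ))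
        (fun x hx => ((hF x (hJsub x hx).1).hasDerivAt.hasDerivWithinAt))
        (fun x hx => (hJsub x hx).2)
      have ht₁J : t₁ ∈ J := by constructor <;> linarith
      have hsJ : s ∈ J := by
        rw [abs_sub_lt_iff] at hs
        constructor <;> [linarith [hs.2]; linarith [hs.1]]
      rcases hDar with h | h
      · exact ⟨fun _ => h s hsJ, fun hc => absurd (h t₁ ht₁J) (by linarith)⟩
      · exact ⟨fun hc => absurd (h t₁ ht₁J) (by linarith), fun _ => h s hsJ⟩
    obtain ⟨c₂, hc₂mem, hc₂ne⟩ := pick (deriv F t₁) (deriv F t₁ + ε) (by linarith)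
    obtain ⟨c₁, hc₁mem, hc₁ne⟩ := pick (deriv F t₁ - ε) (deriv F t₁) (by linarith)
    obtain ⟨δ₂, hδ₂, hlock₂⟩ := lock c₂ hc₂ne
    obtain ⟨δ₁, hδ₁, hlock₁⟩ := lock c₁ hc₁ne
    refine ⟨min δ₁ δ₂, lt_min hδ₁ hδ₂, fun s hs => ?_⟩
    rw [Real.dist_eq] at hs
    have h2 := (hlock₂ s (lt_of_lt_of_le hs (min_le_right _ _))).1 hc₂mem.1
    have h1 := (hlock₁ s (lt_of_lt_of_le hs (min_le_left _ _))).2 hc₁mem.2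
    rw [Real.dist_eq, abs_sub_lt_iff]
    constructor <;> [linarith [hc₂mem.2]; linarith [hc₁mem.1]]

  have udiff : ∀ t₁ ∈ Set.Ioo a b,
      (1 - 4*t₁ + 4*F t₁ - 12*t₁*(deriv F t₁)) ≠ 0 →
      HasDerivAt (deriv F) ((2*(deriv F t₁)^2 + 2*(deriv F t₁)) /
        (1 - 4*t₁ + 4*F t₁ - 12*t₁*(deriv F t₁))) t₁ := by
    intro t₁ ht₁ hQu
    have hu : ContinuousAt (deriv F) t₁ := ucont t₁ ht₁
    rw [hasDerivAt_iff_tendsto_slope]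
    set u := deriv F with hudef
    set Qu := 1 - 4*t₁ + 4*F t₁ - 12*t₁*(u t₁) with hQudef
    -- denominator function
    set den : ℝ → ℝ := fun s => 1 - 6*t₁*(u s + u t₁) - 4*t₁ + 4*F t₁ with hden
    have hdent : Tendsto den (𝓝 t₁) (𝓝 Qu) := by
      have h1 : ContinuousAt den t₁ := by fun_prop
      have h2 : den t₁ = Qu := by simp only [hden, hQudef]; ring
      rw [← h2]
      exact h1
    have hslopeF : Tendsto (slope F t₁) (𝓝[≠] t₁) (𝓝 (u t₁)) :=
      hasDerivAt_iff_tendsto_slope.1 (hF t₁ ht₁).hasDerivAt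
    have huten : Tendsto u (𝓝[≠] t₁) (𝓝 (u t₁)) := hu.tendsto.mono_left nhdsWithin_le_nhds
    -- limit of num/den
    have hmain : Tendsto (fun s => (-((-6*(u s)^2 - 4*(u s)) + slope F t₁ s * (4*(u s) + 2))) / den s)
        (𝓝[≠] t₁) (𝓝 ((2*(u t₁)^2 + 2*(u t₁)) / Qu)) := by
      have hnum : Tendsto (fun s => (-((-6*(u s)^2 - 4*(u s)) + slope F t₁ s * (4*(u s) + 2))))
          (𝓝[≠] t₁) (𝓝 (2*(u t₁)^2 + 2*(u t₁))) := by
        have : (2*(u t₁)^2 + 2*(u t₁)) =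
            -((-6*(u t₁)^2 - 4*(u t₁)) + (u t₁) * (4*(u t₁) + 2)) := by ring
        rw [this]
        exact (( ((huten.pow 2).const_mul (-6)).sub (huten.const_mul 4)).add
          (hslopeF.mul ((huten.const_mul 4).add tendsto_const_nhds))).neg
      exact hnum.div (hdent.mono_left nhdsWithin_le_nhds) hQu
    refine Tendsto.congr' ?_ hmain
    -- eventual equality
    have hev1 : ∀ᶠ s in 𝓝 t₁, s ∈ Set.Ioo a b := isOpen_Ioo.eventually_mem ht₁
    have hev2 : ∀ᶠ s in 𝓝 t₁, den s ≠ 0 := by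
      have : ContinuousAt den t₁ := by fun_prop
      have h2 : den t₁ ≠ 0 := by
        have : den t₁ = Qu := by simp only [hden, hQudef]; ring
        rw [this]; exact hQu
      exact this.eventually_ne h2
    have hev : ∀ᶠ s in 𝓝[≠] t₁, (s ∈ Set.Ioo a b ∧ den s ≠ 0) :=
      (hev1.and hev2).filter_mono (nhdsWithin_le_nhds (s := {t₁}ᶜ))
    filter_upwards [hev, self_mem_nhdsWithin] with s hs hsne
    obtain ⟨hsI, hsden⟩ := hs
    · have hsne' : s ≠ t₁ := hsne
      have hkey : (u s - u t₁) * den s =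
          -((s - t₁)*(-6*(u s)^2 - 4*(u s)) + (F s - F t₁)*(4*(u s) + 2)) := by
        have h1 := hq s hsI
        have h2 := hq t₁ ht₁
        simp only [hden, ← hudef]
        linear_combination h1 - h2
      have hstne : s - t₁ ≠ 0 := sub_ne_zero.2 hsne'
      have hFs : slope F t₁ s * (s - t₁) = F s - F t₁ := by
        rw [slope_def_field]; exact div_mul_cancel₀ _ hstne
      show (-((-6*(u s)^2 - 4*(u s)) + slope F t₁ s * (4*(u s) + 2))) / den s = slope u t₁ s
      rw [slope_def_field u]
      rw [div_eq_div_iff hsden hstne]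
      linear_combination (-1)*hkey + (-(4*(u s)+2))*hFs
  have hBd : ∀ t₁ ∈ Set.Ioo a b,
      (1 - 4*t₁ + 4*F t₁ - 12*t₁*(deriv F t₁)) ≠ 0 →
      HasDerivAt (fun t => (1 - deriv F t)^2
        - 4 * deriv F t * (deriv F t + 1) * (t * deriv F t - F t)) 0 t₁ := by
    intro t₁ ht₁ hQu
    have hu' := udiff t₁ ht₁ hQu
    set m := (2*(deriv F t₁)^2 + 2*(deriv F t₁)) /
        (1 - 4*t₁ + 4*F t₁ - 12*t₁*(deriv F t₁)) with hmdef
    have hm : m * (1 - 4*t₁ + 4*F t₁ - 12*t₁*(deriv F t₁))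
        = 2*(deriv F t₁)^2 + 2*(deriv F t₁) := div_mul_cancel₀ _ hQu
    have hFd : HasDerivAt F (deriv F t₁) t₁ := (hF t₁ ht₁).hasDerivAt
    have h2 := ((hasDerivAt_const t₁ (1:ℝ)).sub hu').pow 2
    have h3 := ((hasDerivAt_id t₁).mul hu').sub hFd
    have h4 := (((hasDerivAt_const t₁ (4:ℝ)).mul hu').mul (hu'.add_const 1)).mul h3
    have total := h2.sub h4
    refine total.congr_deriv (Eq.symm ?_)
    simp only [id_eq, Pi.sub_apply, Pi.mul_apply]
    refine mul_left_cancel₀ hQu ?_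
    linear_combination (-(4*(deriv F t₁) + 4*(deriv F t₁)^2))*hq t₁ ht₁ +
      (2*(1 - deriv F t₁) + (8*(deriv F t₁)+4)*(t₁*(deriv F t₁) - F t₁)
        + 4*(deriv F t₁)*((deriv F t₁)+1)*t₁)*hm
  have hirr : ∀ t₁ ∈ Set.Ioo a b,
      (1 - 4*t₁ + 4*F t₁ - 12*t₁*(deriv F t₁)) = 0 → t₁ = 0 ∨ t₁ = 3/4 ∨ t₁ = 3 := by
    intro t₁ ht₁ hQu0
    have hFd : HasDerivAt F (deriv F t₁) t₁ := (hF t₁ ht₁).hasDerivAt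
    set ψ : ℝ → ℝ := fun t => (1 - 4*t + 4*F t)^2 + 24*t*(2*F t - 1) with hψdef
    have hψ0 : ∀ s ∈ Set.Ioo a b, 0 ≤ ψ s := by
      intro s hs
      have h := hq s hs
      have e : ψ s = (1 - 4*s + 4*F s - 12*s*(deriv F s))^2 := by
        simp only [hψdef]; linear_combination (24*s)*h
      rw [e]; positivity
    have hψt₁ : ψ t₁ = 0 := by
      have e : ψ t₁ = (1 - 4*t₁ + 4*F t₁ - 12*t₁*(deriv F t₁))^2 := by
        simp only [hψdef]; linear_combination (24*t₁)*hq t₁ ht₁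
      rw [e, hQu0]; norm_num
    have hmin : IsLocalMin ψ t₁ := by
      refine Filter.eventually_of_mem (isOpen_Ioo.mem_nhds ht₁) ?_
      intro s hs
      rw [hψt₁]
      exact hψ0 s hs
    have hL := ((hasDerivAt_const t₁ (1:ℝ)).sub ((hasDerivAt_id t₁).const_mul (4:ℝ))).add
      (hFd.const_mul (4:ℝ))
    have hψd := (hL.pow 2).add
      (((hasDerivAt_id t₁).const_mul (24:ℝ)).mul ((hFd.const_mul (2:ℝ)).sub_const 1))
    have hcrit := hmin.hasDerivAt_eq_zero hψd
    simp only [id_eq, Pi.add_apply, Pi.sub_apply] at hcrit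
    have hP : -4718592*t₁^2*(t₁ - 3/4)^2*(t₁ - 3) = 0 := by
      linear_combination ((-33739776) + (8902656)*(deriv F t₁) + (37232640)*(F t₁) + (32956416)*(F t₁)*(deriv F t₁) + (41582592)*(F t₁)^2 + (-21233664)*(F t₁)^2*(deriv F t₁) + (-24772608)*(F t₁)^3 + (-42467328)*(F t₁)^3*(deriv F t₁) + (10838016)*t₁ + (-9289728)*t₁*(F t₁) + (-21233664)*t₁*(F t₁)^2 + (4718592)*t₁*(F t₁)^3 + (17694720)*t₁^3 + (7077888)*t₁^3*(F t₁) + (-7077888)*t₁^4) * hq t₁ ht₁ + ((7031808) + (14644224)*(deriv F t₁) + (-4451328)*(deriv F t₁)^2 + (-10303488)*(F t₁) + (-26855424)*(F t₁)*(deriv F t₁) + (-16478208)*(F t₁)*(deriv F t₁)^2 + (-9732096)*(F t₁)^2 + (-15482880)*(F t₁)^2*(deriv F t₁) + (10616832)*(F t₁)^2*(deriv F t₁)^2 + (6193152)*(F t₁)^3 + (23003136)*(F t₁)^3*(deriv F t₁) + (21233664)*(F t₁)^3*(deriv F t₁)^2 + (-1806336)*t₁ + (-5419008)*t₁*(deriv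 F t₁) + (1548288)*t₁*(F t₁) + (4644864)*t₁*(F t₁)*(deriv F t₁) + (3538944)*t₁*(F t₁)^2 + (10616832)*t₁*(F t₁)^2*(deriv F t₁) + (-1179648)*t₁*(F t₁)^3 + (-2359296)*t₁*(F t₁)^3*(deriv F t₁) + (737280)*t₁^2 + (3244032)*t₁^2*(F t₁) + (1179648)*t₁^2*(F t₁)^2 + (-3244032)*t₁^3 + (-8847360)*t₁^3*(deriv F t₁) + (-2359296)*t₁^3*(F t₁) + (-3538944)*t₁^3*(F t₁)*(deriv F t₁) + (1179648)*t₁^4 + (3538944)*t₁^4*(deriv F t₁)) * hQu0 + ((1274112) + (-556416)*(deriv F t₁) + (-2078208)*(F t₁) + (-2059776)*(F t₁)*(deriv F t₁) + (-1603584)*(F t₁)^2 + (1327104)*(F t₁)^2*(deriv F t₁) + (1548288)*(F t₁)^3 + (2654208)*(F t₁)^3*(deriv F t₁) + (-294912)*t₁*(F t₁)^3) * hcrit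
    by_contra hcon
    push_neg at hcon
    obtain ⟨h1, h2, h3⟩ := hcon
    exact (mul_ne_zero (mul_ne_zero (mul_ne_zero (by norm_num : (-4718592:ℝ) ≠ 0)
      (pow_ne_zero 2 h1)) (pow_ne_zero 2 (sub_ne_zero.2 h2))) (sub_ne_zero.2 h3)) hP
  have hBc : ∀ t₁ ∈ Set.Ioo a b, ContinuousAt (fun t => (1 - deriv F t)^2
      - 4 * deriv F t * (deriv F t + 1) * (t * deriv F t - F t)) t₁ := by
    intro t₁ ht₁
    have h1 := ucont t₁ ht₁
    have h2 : ContinuousAt F t₁ := (hF t₁ ht₁).continuousAt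
    fun_prop
  have hgood : ∀ t ∈ Set.Ioo a b, t ∉ ({0, 3/4, 3} : Set ℝ) →
      HasDerivAt (fun t => (1 - deriv F t)^2
        - 4 * deriv F t * (deriv F t + 1) * (t * deriv F t - F t)) 0 t := by
    intro t ht htZ
    refine hBd t ht ?_
    intro hQu0
    exact htZ (by
      have := hirr t ht hQu0
      simpa only [Set.mem_insert_iff, Set.mem_singleton_iff] using this)
  have hglue := const_of_finite_bad a b ({0, 3/4, 3} : Set ℝ) (Set.toFinite _)
    (fun t => (1 - deriv F t)^2
      - 4 * deriv F t * (deriv F t + 1) * (t * deriv F t - F t)) hBc hgood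
  intro t ht
  have := hglue t ht t₀ ht₀
  simpa only [hB0] using this
end

section
/- Given the forward relation q_{n+1} + t/q_n = (1+n)/p_{n+1} and the backward relation q_{n-1} = t/(n/p_n − q_n), together with the recurrence p_{n+1} = (q_n²/t)(p_n − 1) − (v q_n/t) + 1, the variables q satisfy the alternate discrete Painlevé II equation: (1+n)/(q_n q_{n+1} + t) + n/(q_n q_{n-1} + t) = 1/q_n − q_n/t + (n − v)/t. -/
/-- The alternate discrete Painlevé II equation: given the recurrence
`p_{n+1} = (q_n²/t)(p_n − 1) − v q_n/t + 1`, the forward relation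
`q_{n+1} + t/q_n = (1+n)/p_{n+1}` and the backward relation
`q_{n-1} = t/(n/p_n − q_n)`, one has
`(1+n)/(q_n q_{n+1} + t) + n/(q_n q_{n-1} + t) = 1/q_n − q_n/t + (n − v)/t`. -/
theorem alternate_discrete_PII (n : ℕ) (t v pn pn1 qnm qn qn1 : ℝ)
    (ht : t ≠ 0) (hqn : qn ≠ 0) (hpn : pn ≠ 0) (hpn1 : pn1 ≠ 0)
    (hd1 : qn * qn1 + t ≠ 0) (hd2 : qn * qnm + t ≠ 0)
    (hd3 : (n : ℝ) / pn - qn ≠ 0)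
    (hp : pn1 = qn ^ 2 / t * (pn - 1) - v * qn / t + 1)
    (hfwd : qn1 + t / qn = (1 + n) / pn1)
    (hbwd : qnm = t / ((n : ℝ) / pn - qn)) :
    (1 + n) / (qn * qn1 + t) + n / (qn * qnm + t)
      = 1 / qn - qn / t + ((n : ℝ) - v) / t := by
  have hn : (n : ℝ) ≠ 0 := by
    intro h
    apply hd2
    rw [hbwd, h, zero_div, zero_sub, div_neg, mul_neg, mul_div_cancel₀ _ hqn]
    ring
  have h1n : (1 : ℝ) + n ≠ 0 := by positivity
  have hq1 : qn1 = (1 + n) / pn1 - t / qn := by linarith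
  have hnp : (n : ℝ) - qn * pn ≠ 0 := by
    intro h
    apply hd3
    field_simp
    linarith
  have e1 : (1 + (n : ℝ)) / (qn * qn1 + t) = pn1 / qn := by
    rw [hq1]
    rw [div_eq_div_iff (by rw [← hq1]; exact hd1) hqn]
    field_simp
    ring
  have e2 : (n : ℝ) / (qn * qnm + t) = ((n : ℝ) - qn * pn) / t := by
    rw [hbwd]
    rw [div_eq_div_iff (by rw [← hbwd]; exact hd2) ht]
    field_simp
    ring
  rw [e1, e2, hp]
  field_simp
  ring
end
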